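/- Let G be a connected graph, v ∈ V(G), and H be obtained from G by attaching a pendant u to v. If S is a metric basis of H containing u, then (S \ {u}) ∪ {v} is a resolving set of G. -/

import Mathlib

open SimpleGraph

def isResolving {V : Type*} (G : SimpleGraph V) (S : Set V) : Prop :=
  ∀ x y : V, x ≠ y → ∃ s ∈ S, G.dist s x ≠ G.dist s y

noncomputable def metricDim {V : Type*} (G : SimpleGraph V) : ℕ :=
  sInf {n | ∃ S : Set V, isResolving G S ∧ S.ncard = n}

def isMetricBasis {V : Type*} (G : SimpleGraph V) (S : Set V) : Prop :=
  isResolving G S ∧ S.ncard = metricDim G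

def isBasisForced {V : Type*} (G : SimpleGraph V) (v : V) : Prop :=
  ∀ S : Set V, isMetricBasis G S → v ∈ S

def attachPendant {V : Type*} (G : SimpleGraph V) (v : V) : SimpleGraph (Option V) :=
  SimpleGraph.fromRel (fun x y =>
    (∃ a b, x = some a ∧ y = some b ∧ G.Adj a b) ∨ (x = some v ∧ y = none))

section Aux

variable {V : Type*} (G : SimpleGraph V) (v : V)

lemma ap_adj_some_some {a b : V} :
    (attachPendant G v).Adj (some a) (some b) ↔ G.Adj a b := by
  constructor
  · rintro ⟨hne, h | h⟩
    · rcases h with ⟨a', b', ha, hb, hadj⟩ | ⟨_, h⟩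
      · cases ha; cases hb; exact hadj
      · simp at h
    · rcases h with ⟨a', b', ha, hb, hadj⟩ | ⟨_, h⟩
      · cases ha; cases hb; exact hadj.symm
      · simp at h
  · intro h
    exact ⟨by simpa using h.ne, Or.inl (Or.inl ⟨a, b, rfl, rfl, h⟩)⟩

lemma ap_adj_none {x : Option V} :
    (attachPendant G v).Adj none x ↔ x = some v := by
  constructor
  · rintro ⟨hne, h | h⟩
    · rcases h with ⟨a', b', ha, _, _⟩ | ⟨h, _⟩ <;> simp_all
    · rcases h with ⟨a', b', _, hb, _⟩ | ⟨h, _⟩ <;> simp_all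
  · rintro rfl
    exact ⟨by simp, Or.inr (Or.inr ⟨rfl, rfl⟩)⟩

/-- The homomorphism from `G` into the attach-pendant graph. -/
def ap_hom : G →g attachPendant G v :=
  ⟨some, fun h => (ap_adj_some_some G v).2 h⟩

lemma ap_walk_map : ∀ {x y : Option V} (w : (attachPendant G v).Walk x y),
    ∃ w' : G.Walk (x.getD v) (y.getD v), w'.length ≤ w.length := by
  intro x y w
  induction w with
  | nil => exact ⟨SimpleGraph.Walk.nil, le_refl _⟩
  | @cons x b y h p ih =>
    obtain ⟨w', hw'⟩ := ih
    by_cases hfb : x.getD v = b.getD v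
    · exact ⟨w'.copy hfb.symm rfl, by simpa using hw'.trans (Nat.le_succ _)⟩
    · have hadj : G.Adj (x.getD v) (b.getD v) := by
        match x, b with
        | some a, some b' => exact (ap_adj_some_some G v).1 h
        | none, b' =>
          have := (ap_adj_none G v).1 h
          subst this; simp at hfb
        | some a, none =>
          have := (ap_adj_none G v).1 h.symm
          simp_all
      exact ⟨SimpleGraph.Walk.cons hadj w', by simpa using Nat.succ_le_succ hw'⟩

lemma ap_dist_some_some (hG : G.Connected) (a b : V) :
    (attachPendant G v).dist (some a) (some b) = G.dist a b := by
  apply le_antisymm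
  · obtain ⟨p, hp⟩ := hG.exists_walk_length_eq_dist a b
    calc (attachPendant G v).dist (some a) (some b) ≤ (p.map (ap_hom G v)).length :=
          SimpleGraph.dist_le _
      _ = G.dist a b := by simpa using hp
  · have hr : (attachPendant G v).Reachable (some a) (some b) :=
      ((hG.preconnected a b).map (ap_hom G v) :)
    obtain ⟨q, hq⟩ := hr.exists_walk_length_eq_dist
    obtain ⟨w', hw'⟩ := ap_walk_map G v q
    calc G.dist a b ≤ w'.length := SimpleGraph.dist_le _
      _ ≤ q.length := hw'
      _ = _ := hq

lemma ap_dist_none (hG : G.Connected) (a : V) :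
    (attachPendant G v).dist none (some a) = G.dist v a + 1 := by
  apply le_antisymm
  · obtain ⟨p, hp⟩ := hG.exists_walk_length_eq_dist v a
    have hadj : (attachPendant G v).Adj none (some v) := (ap_adj_none G v).2 rfl
    calc (attachPendant G v).dist none (some a)
        ≤ (SimpleGraph.Walk.cons hadj (p.map (ap_hom G v))).length :=
          SimpleGraph.dist_le _
      _ = G.dist v a + 1 := congrArg (· + 1) ((SimpleGraph.Walk.length_map _ _).trans hp)
  · have hadj : (attachPendant G v).Adj none (some v) := (ap_adj_none G v).2 rfl
    have hr : (attachPendant G v).Reachable none (some a) :=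
      hadj.reachable.trans ((hG.preconnected v a).map (ap_hom G v) :)
    obtain ⟨q, hq⟩ := hr.exists_walk_length_eq_dist
    cases q with
    | @cons _ b _ h p =>
      have hb := (ap_adj_none G v).1 h
      subst hb
      obtain ⟨w', hw'⟩ := ap_walk_map G v p
      have : G.dist v a ≤ p.length :=
        le_trans (SimpleGraph.dist_le _) hw'
      simp only [SimpleGraph.Walk.length_cons] at hq
      omega

end Aux

theorem stmt3 {V : Type*} [Fintype V] (G : SimpleGraph V) (hG : G.Connected)
    (v : V) (S : Set (Option V))
    (hS : isMetricBasis (attachPendant G v) S) (hu : (none : Option V) ∈ S) :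
    isResolving G (insert v (some ⁻¹' S)) := by
  intro x y hxy
  obtain ⟨s, hs, hd⟩ := hS.1 (some x) (some y) (by simpa using hxy)
  cases s with
  | none =>
    refine ⟨v, Set.mem_insert _ _, ?_⟩
    rw [ap_dist_none G v hG x, ap_dist_none G v hG y] at hd
    omega
  | some a =>
    refine ⟨a, Set.mem_insert_iff.2 (Or.inr hs), ?_⟩
    rwa [ap_dist_some_some G v hG a x, ap_dist_some_some G v hG a y] at hd
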